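/- Let n ≥ 2, and let z, z' : ℤ → ℂ be n-periodic sequences (z_{k+n} = z_k and z'_{k+n} = z'_k for all k). Let j ∈ {1, …, n} and assume: z'_k = z_k for every k not congruent to j or j+1 modulo n, and z'_j + z'_{j+1} = z_j + z_{j+1}, z'_j·conj(z'_{j+1}) = z_j·conj(z_{j+1}). Let f := (1 + (z₁𝐣)t)·(1 + (z₂𝐣)t)·⋯·(1 + (zₙ𝐣)t) ∈ ℍ[t] and f' := (1 + (z'₁𝐣)t)·⋯·(1 + (z'ₙ𝐣)t) ∈ ℍ[t], products taken in increasing order of the index. Then the images of f and f' in the formal power series ring ℍ[[t]] are conjugate by a unit: there exists a unit u of ℍ[[t]] such that f = u·f'·u⁻¹ in ℍ[[t]]. -/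

import Mathlib

open Polynomial

/-- The quaternion `z𝐣 = x𝐣 + y𝐤` for a complex number `z = x + iy`. -/
def toQj (z : ℂ) : Quaternion ℝ := ⟨0, 0, z.re, z.im⟩

lemma toQj_add (a b : ℂ) : toQj (a + b) = toQj a + toQj b := by
  ext <;> simp only [Quaternion.re_add, Quaternion.imI_add, Quaternion.imJ_add,
    Quaternion.imK_add] <;> simp [toQj]

lemma toQj_mul (a b : ℂ) :
    toQj a * toQj b = ⟨-(a * (starRingEnd ℂ) b).re, -(a * (starRingEnd ℂ) b).im, 0, 0⟩ := by
  ext <;>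
  simp only [Quaternion.re_mul, Quaternion.imI_mul,
    Quaternion.imJ_mul, Quaternion.imK_mul] <;>
  simp only [toQj, Quaternion.re_mul, Quaternion.imI_mul,
    Quaternion.imJ_mul, Quaternion.imK_mul, Complex.mul_re, Complex.mul_im,
    Complex.conj_re, Complex.conj_im]
  <;> ring

-- pair lemma
lemma pair_key (u v : Quaternion ℝ) :
    (1 + C u * X) * (1 + C v * X) = 1 + C (u + v) * X + C (u * v) * X ^ 2 := by
  have h : (X : Polynomial (Quaternion ℝ)) * C v = C v * X := X_mul_C v
  rw [mul_add, mul_one, add_mul, one_mul, mul_assoc, ← mul_assoc X, h,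
    mul_assoc, ← mul_assoc (C u), ← C_mul, ← sq]
  rw [C_add, add_mul]
  abel

lemma pair_eq {a b a' b' : ℂ} (hs : a' + b' = a + b)
    (hp : a' * (starRingEnd ℂ) b' = a * (starRingEnd ℂ) b) :
    (1 + C (toQj a') * X) * (1 + C (toQj b') * X)
      = (1 + C (toQj a) * X) * (1 + C (toQj b) * X) := by
  rw [pair_key, pair_key, ← toQj_add, ← toQj_add, hs, toQj_mul, toQj_mul, hp]

/-- The image of a quaternionic polynomial in the ring `ℍ[[t]]` of formal power series. -/
noncomputable def toPS (f : Polynomial (Quaternion ℝ)) : PowerSeries (Quaternion ℝ) :=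
  PowerSeries.mk fun k => f.coeff k

noncomputable def toPSHom : Polynomial (Quaternion ℝ) →+* PowerSeries (Quaternion ℝ) where
  toFun := toPS
  map_zero' := PowerSeries.ext fun k => by simp [toPS]
  map_one' := PowerSeries.ext fun k => by
    simp [toPS, PowerSeries.coeff_one, Polynomial.coeff_one, eq_comm]
  map_add' f g := PowerSeries.ext fun k => by simp [toPS]
  map_mul' f g := PowerSeries.ext fun k => by
    simp [toPS, PowerSeries.coeff_mul, Polynomial.coeff_mul]

lemma toPS_mul (f g : Polynomial (Quaternion ℝ)) : toPS (f * g) = toPS f * toPS g :=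
  toPSHom.map_mul f g

lemma toPS_F (a : Quaternion ℝ) :
    toPS (1 + C a * X) = 1 + PowerSeries.C a * PowerSeries.X := by
  refine PowerSeries.ext fun k => ?_
  match k with
  | 0 => simp [toPS]
  | 1 => simp [toPS, PowerSeries.coeff_one, Polynomial.coeff_one]
  | (k+2) => simp [toPS, PowerSeries.coeff_one, PowerSeries.coeff_X, Polynomial.coeff_one,
      Polynomial.coeff_X]

/-- `1 + a·t` as a unit of `ℍ[[t]]`, with inverse the geometric series. -/
noncomputable def oneAddXUnit (a : Quaternion ℝ) : (PowerSeries (Quaternion ℝ))ˣ where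
  val := 1 + PowerSeries.C a * PowerSeries.X
  inv := PowerSeries.mk fun k => (-a) ^ k
  val_inv := by
    refine PowerSeries.ext fun k => ?_
    rw [add_mul, one_mul, map_add, mul_assoc, PowerSeries.coeff_C_mul]
    cases k with
    | zero =>
      simp [PowerSeries.coeff_zero_eq_constantCoeff]
    | succ k =>
      rw [PowerSeries.coeff_succ_X_mul]
      simp [PowerSeries.coeff_one, pow_succ']
  inv_val := by
    refine PowerSeries.ext fun k => ?_
    rw [mul_add, mul_one, map_add, ← mul_assoc]
    cases k with
    | zero =>
      simp [PowerSeries.coeff_zero_eq_constantCoeff]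
    | succ k =>
      rw [PowerSeries.coeff_succ_mul_X, PowerSeries.coeff_mul_C]
      simp [PowerSeries.coeff_one, pow_succ]

lemma not_int_modeq {n a b : ℤ} (hab : a ≠ b) (h1 : a - b < n) (h2 : b - a < n) :
    ¬ a ≡ b [ZMOD n] := by
  intro hmod
  obtain ⟨c, hc⟩ := Int.ModEq.dvd hmod
  have hn0 : 0 < n := by omega
  rcases lt_trichotomy c 0 with hcl | rfl | hcg
  · have h3 : n * c ≤ n * (-1) := mul_le_mul_of_nonneg_left (by omega) (le_of_lt hn0)
    omega
  · omega
  · have h3 : n * 1 ≤ n * c := mul_le_mul_of_nonneg_left (by omega) (le_of_lt hn0)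
    omega

lemma split_prod (g : ℕ → Polynomial (Quaternion ℝ)) (m r : ℕ) :
    ((List.range (m + (2 + r))).map g).prod =
      ((List.range m).map g).prod * (g m * g (m + 1)) *
        ((List.range r).map fun i => g (m + 2 + i)).prod := by
  rw [List.range_add, List.map_append, List.prod_append, List.map_map,
    List.range_add, List.map_append, List.prod_append, List.map_map, ← mul_assoc]
  congr 2 <;> simp [Function.comp, add_assoc, show List.range 2 = [0, 1] from rfl]

lemma split_ends (g : ℕ → Polynomial (Quaternion ℝ)) (s : ℕ) :
    ((List.range (1 + (s + 1))).map g).prod =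
      g 0 * ((List.range s).map fun i => g (1 + i)).prod * g (1 + s) := by
  rw [List.range_add, List.map_append, List.prod_append, List.map_map,
    show List.range 1 = [0] from rfl, List.range_succ, List.map_append,
    List.prod_append, ← mul_assoc]
  congr 2 <;> simp [Function.comp]

/-- Invariance of the similarity class under recutting: if the `n`-periodic sequence of
edge vectors `z'` is obtained from `z` by recutting at the `j`-th vertex, then the
associated quaternionic polynomials `f = ∏ (1 + (z_k 𝐣) t)` and `f' = ∏ (1 + (z'_k 𝐣) t)`
are conjugate by a unit in `ℍ[[t]]`. -/
theorem recutting_similarity_invariant (n : ℕ) (hn : 2 ≤ n)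
    (z z' : ℤ → ℂ)
    (hz : ∀ k : ℤ, z (k + n) = z k) (hz' : ∀ k : ℤ, z' (k + n) = z' k)
    (j : ℤ) (hj1 : 1 ≤ j) (hjn : j ≤ n)
    (hfix : ∀ k : ℤ, ¬ k ≡ j [ZMOD (n : ℤ)] → ¬ k ≡ j + 1 [ZMOD (n : ℤ)] → z' k = z k)
    (hsum : z' j + z' (j + 1) = z j + z (j + 1))
    (hprod : z' j * (starRingEnd ℂ) (z' (j + 1)) = z j * (starRingEnd ℂ) (z (j + 1))) :
    ∃ u : (PowerSeries (Quaternion ℝ))ˣ,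
      toPS (((List.range n).map fun k => 1 + C (toQj (z ((k : ℤ) + 1))) * X).prod) =
        (u : PowerSeries (Quaternion ℝ)) *
          toPS (((List.range n).map fun k => 1 + C (toQj (z' ((k : ℤ) + 1))) * X).prod) *
          ((u⁻¹ : (PowerSeries (Quaternion ℝ))ˣ) : PowerSeries (Quaternion ℝ)) := by
  simp only [bind_pure_comp, List.map_eq_map, List.map_map]
  by_cases hcase : j = (n : ℤ)
  · -- wrap-around case: recutting at the vertex between edge n and edge 1
    subst hcase
    obtain ⟨s, hs⟩ : ∃ s, n = 1 + (s + 1) := ⟨n - 2, by omega⟩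
    have hzn1 : z ((n : ℤ) + 1) = z 1 := by rw [add_comm]; exact hz 1
    have hzn1' : z' ((n : ℤ) + 1) = z' 1 := by rw [add_comm]; exact hz' 1
    rw [hzn1, hzn1'] at hsum hprod
    have hpair := pair_eq hsum hprod
    refine ⟨oneAddXUnit (toQj (z 1)) * (oneAddXUnit (toQj (z' 1)))⁻¹, ?_⟩
    rw [hs, split_ends, split_ends, toPS_mul, toPS_mul, toPS_mul, toPS_mul]
    simp only [Function.comp_apply]
    have e0 : ((0 : ℕ) : ℤ) + 1 = 1 := by norm_num
    have e1 : ((1 + s : ℕ) : ℤ) + 1 = (n : ℤ) := by omega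
    rw [e0, e1]
    have hM : ((List.range s).map fun i =>
          (1 : Polynomial (Quaternion ℝ)) + C (toQj (z' (((1 + i : ℕ) : ℤ) + 1))) * X) =
        (List.range s).map fun i => 1 + C (toQj (z (((1 + i : ℕ) : ℤ) + 1))) * X := by
      apply List.map_congr_left
      intro i hi
      have hi' := List.mem_range.mp hi
      rw [hfix _ (not_int_modeq (by omega) (by omega) (by omega))
        (not_int_modeq (by omega) (by omega) (by omega))]
    rw [hM]
    have hA : toPS (1 + C (toQj (z 1)) * X) = ((oneAddXUnit (toQj (z 1)) : (PowerSeries (Quaternion ℝ))ˣ) : PowerSeries (Quaternion ℝ)) := toPS_F _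
    have hA' : toPS (1 + C (toQj (z' 1)) * X) = ((oneAddXUnit (toQj (z' 1)) : (PowerSeries (Quaternion ℝ))ˣ) : PowerSeries (Quaternion ℝ)) := toPS_F _
    rw [hA, hA']
    set UA := oneAddXUnit (toQj (z 1))
    set UA' := oneAddXUnit (toQj (z' 1))
    set Bp := toPS (1 + C (toQj (z (n : ℤ))) * X)
    set B'p := toPS (1 + C (toQj (z' (n : ℤ))) * X)
    set Mp := toPS (((List.range s).map fun i =>
      (1 : Polynomial (Quaternion ℝ)) + C (toQj (z (((1 + i : ℕ) : ℤ) + 1))) * X).prod)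
    have hBA : B'p * (UA' : PowerSeries (Quaternion ℝ)) = Bp * UA := by
      rw [← hA, ← hA', ← toPS_mul, ← toPS_mul, hpair]
    have key : B'p * ((UA' : PowerSeries (Quaternion ℝ)) * (UA⁻¹ : (PowerSeries (Quaternion ℝ))ˣ)) = Bp := by
      rw [← mul_assoc, hBA, Units.mul_inv_cancel_right]
    rw [mul_inv_rev, inv_inv, Units.val_mul, Units.val_mul]
    simp only [mul_assoc, Units.inv_mul_cancel_left]
    rw [key]
  · -- interior case: the polynomial does not change at all
    have hjlt : j < (n : ℤ) := lt_of_le_of_ne hjn hcase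
    set m : ℕ := (j - 1).toNat with hm
    have hmz : (m : ℤ) = j - 1 := Int.toNat_of_nonneg (by omega)
    obtain ⟨r, hnr⟩ : ∃ r, n = m + (2 + r) := ⟨n - (m + 2), by omega⟩
    refine ⟨1, ?_⟩
    simp only [Units.val_one, inv_one, one_mul, mul_one]
    refine congrArg toPS ?_
    rw [hnr, split_prod, split_prod]
    simp only [Function.comp_apply]
    have e1 : ((m : ℕ) : ℤ) + 1 = j := by omega
    have e2 : ((m + 1 : ℕ) : ℤ) + 1 = j + 1 := by omega
    have hpre : List.map ((fun k : ℤ => 1 + C (toQj (z' (k + 1))) * X) ∘ Nat.cast)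
          (List.range m) =
        List.map ((fun k : ℤ => 1 + C (toQj (z (k + 1))) * X) ∘ Nat.cast) (List.range m) := by
      refine List.map_congr_left fun k hk => ?_
      have hk' := List.mem_range.mp hk
      simp only [Function.comp_apply]
      rw [hfix _ (not_int_modeq (by omega) (by omega) (by omega))
        (not_int_modeq (by omega) (by omega) (by omega))]
    have hsuf : (List.map (fun i => (1 : Polynomial (Quaternion ℝ)) +
            C (toQj (z' (((m + 2 + i : ℕ) : ℤ) + 1))) * X) (List.range r)) =
        List.map (fun i => (1 : Polynomial (Quaternion ℝ)) +
            C (toQj (z (((m + 2 + i : ℕ) : ℤ) + 1))) * X) (List.range r) := by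
      refine List.map_congr_left fun i hi => ?_
      have hi' := List.mem_range.mp hi
      rw [hfix _ (not_int_modeq (by omega) (by omega) (by omega))
        (not_int_modeq (by omega) (by omega) (by omega))]
    have hmid : ((1 : Polynomial (Quaternion ℝ)) + C (toQj (z (((m : ℕ) : ℤ) + 1))) * X) *
          (1 + C (toQj (z (((m + 1 : ℕ) : ℤ) + 1))) * X) =
        (1 + C (toQj (z' (((m : ℕ) : ℤ) + 1))) * X) *
          (1 + C (toQj (z' (((m + 1 : ℕ) : ℤ) + 1))) * X) := by
      rw [e1, e2]
      exact (pair_eq hsum hprod).symm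
    rw [hpre, hsuf, hmid]
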